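/- Let n₀, e₀ ∈ ℝⁿ be orthonormal, let θ ∈ (0, π), and set n₁ = (cos θ) n₀ + (sin θ) e₀ and e₁ = −(sin θ) n₀ + (cos θ) e₀. Define n_t = λ(t,θ) n₁ + λ(1−t,θ) n₀ and e_t = λ(t,θ) e₁ + λ(1−t,θ) e₀. Then for all t ∈ ℝ, e_t = (1/θ) · (d n_t / dt); consequently, for any c₀, c₁ ∈ ℝ and c_t = λ(t,θ) c₁ + λ(1−t,θ) c₀, the vector field (e_t, (1/θ) c_t' ε) along the Lorentzian geodesic γ(t) = (n_t, c_t ε) equals (1/θ) γ'(t), and hence is Lorentzian parallel along γ. -/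

import Mathlib

open RealInnerProductSpace

/-- The function `λ(x,θ)`: `sin(xθ)/sin(θ)` for `θ ≠ 0`, and `x` for `θ = 0`. -/
noncomputable def lam (x θ : ℝ) : ℝ := if θ = 0 then x else Real.sin (x * θ) / Real.sin θ

/-- The point `(u, cε) = (u₁, …, u_n, c, c) ∈ ℝ^{n+2}`. -/
noncomputable def emb {n : ℕ} (u : EuclideanSpace ℝ (Fin n)) (c : ℝ) : Fin (n + 2) → ℝ :=
  fun i => if h : (i : ℕ) < n then u ⟨i, h⟩ else c

private lemma lam_eq {θ : ℝ} (hθ : θ ≠ 0) (x : ℝ) :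
    lam x θ = Real.sin (x * θ) / Real.sin θ := by simp [lam, hθ]

private lemma hd_mul (θ t : ℝ) : HasDerivAt (fun s : ℝ => s * θ) θ t := by
  simpa using (hasDerivAt_id t).mul_const θ

private lemma hd_sub (θ t : ℝ) : HasDerivAt (fun s : ℝ => (1 - s) * θ) (-θ) t := by
  have := (((hasDerivAt_id t).const_sub 1).mul_const θ)
  simpa using this

private lemma hasDerivAt_lam1 {θ : ℝ} (hθ : θ ≠ 0) (t : ℝ) :
    HasDerivAt (fun s => lam s θ) (θ * Real.cos (t * θ) / Real.sin θ) t := by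
  have h2 := ((Real.hasDerivAt_sin (t * θ)).comp t (hd_mul θ t)).div_const (Real.sin θ)
  have h3 : (fun s => lam s θ) = fun s => Real.sin (s * θ) / Real.sin θ :=
    funext (lam_eq hθ)
  rw [h3]
  exact h2.congr_deriv (by ring)

private lemma hasDerivAt_lam2 {θ : ℝ} (hθ : θ ≠ 0) (t : ℝ) :
    HasDerivAt (fun s => lam (1 - s) θ) (-(θ * Real.cos ((1 - t) * θ)) / Real.sin θ) t := by
  have h2 := ((Real.hasDerivAt_sin ((1 - t) * θ)).comp t (hd_sub θ t)).div_const (Real.sin θ)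
  have h3 : (fun s => lam (1 - s) θ) = fun s => Real.sin ((1 - s) * θ) / Real.sin θ :=
    funext fun s => lam_eq hθ _
  rw [h3]
  exact h2.congr_deriv (by ring)

theorem parallel_frame_velocity {n : ℕ} (hn : 2 ≤ n)
    (n₀ e₀ : EuclideanSpace ℝ (Fin n))
    (hn₀ : ‖n₀‖ = 1) (he₀ : ‖e₀‖ = 1) (horth : ⟪n₀, e₀⟫ = 0)
    (θ : ℝ) (hθ : θ ∈ Set.Ioo 0 Real.pi)
    (n₁ e₁ : EuclideanSpace ℝ (Fin n))
    (hn₁ : n₁ = Real.cos θ • n₀ + Real.sin θ • e₀)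
    (he₁ : e₁ = -Real.sin θ • n₀ + Real.cos θ • e₀)
    (nt et : ℝ → EuclideanSpace ℝ (Fin n))
    (hnt : ∀ t, nt t = lam t θ • n₁ + lam (1 - t) θ • n₀)
    (het : ∀ t, et t = lam t θ • e₁ + lam (1 - t) θ • e₀) :
    (∀ t : ℝ, et t = (1 / θ) • deriv nt t) ∧
    ∀ (c₀ c₁ : ℝ) (ct : ℝ → ℝ), (∀ t, ct t = lam t θ * c₁ + lam (1 - t) θ * c₀) →
      ∀ γ : ℝ → Fin (n + 2) → ℝ, (∀ t, γ t = emb (nt t) (ct t)) →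
        (∀ t : ℝ, emb (et t) ((1 / θ) * deriv ct t) = (1 / θ) • deriv γ t) ∧
        ∃ f : ℝ → ℝ, ∀ t : ℝ,
          deriv (fun s => emb (et s) ((1 / θ) * deriv ct s)) t = f t • γ t := by
  obtain ⟨hθ0, hθπ⟩ := hθ
  have hθne : θ ≠ 0 := ne_of_gt hθ0
  have hs : Real.sin θ ≠ 0 := ne_of_gt (Real.sin_pos_of_pos_of_lt_pi hθ0 hθπ)
  have hnteq : nt = fun s => lam s θ • n₁ + lam (1 - s) θ • n₀ := funext hnt
  have key_nt : ∀ t, HasDerivAt nt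
      ((θ * Real.cos (t * θ) / Real.sin θ) • n₁ +
        (-(θ * Real.cos ((1 - t) * θ)) / Real.sin θ) • n₀) t := by
    intro t
    rw [hnteq]
    exact ((hasDerivAt_lam1 hθne t).smul_const n₁).add ((hasDerivAt_lam2 hθne t).smul_const n₀)
  have part1 : ∀ t : ℝ, et t = (1 / θ) • deriv nt t := by
    intro t
    rw [(key_nt t).deriv, het t, hn₁, he₁, lam_eq hθne, lam_eq hθne]
    have h1 : (1 - t) * θ = θ - t * θ := by ring
    match_scalars <;>
      · rw [h1]
        simp only [Real.cos_sub, Real.sin_sub]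
        field_simp
        ring
  refine ⟨part1, ?_⟩
  intro c₀ c₁ ct hct γ hγ
  set A : Fin (n + 2) → ℝ := emb n₁ c₁ with hA
  set B : Fin (n + 2) → ℝ := emb n₀ c₀ with hB
  have hγi : ∀ t i, γ t i = lam t θ * A i + lam (1 - t) θ * B i := by
    intro t i
    rw [hγ t, hnt t, hct t, hA, hB]
    unfold emb
    by_cases h : (i : ℕ) < n
    · simp [h]
    · simp [h]
  have key_ct : ∀ t, HasDerivAt ct
      (θ * Real.cos (t * θ) / Real.sin θ * c₁ +
        -(θ * Real.cos ((1 - t) * θ)) / Real.sin θ * c₀) t := by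
    intro t
    rw [funext hct]
    exact ((hasDerivAt_lam1 hθne t).mul_const c₁).add ((hasDerivAt_lam2 hθne t).mul_const c₀)
  have key_γ : ∀ t, HasDerivAt γ
      (fun i => θ * Real.cos (t * θ) / Real.sin θ * A i +
        -(θ * Real.cos ((1 - t) * θ)) / Real.sin θ * B i) t := by
    intro t
    refine hasDerivAt_pi.2 fun i => ?_
    have h3 : (fun s => γ s i) = fun s => lam s θ * A i + lam (1 - s) θ * B i :=
      funext fun s => hγi s i
    rw [h3]
    exact ((hasDerivAt_lam1 hθne t).mul_const (A i)).add
      ((hasDerivAt_lam2 hθne t).mul_const (B i))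
  have claimA : ∀ t : ℝ, emb (et t) ((1 / θ) * deriv ct t) = (1 / θ) • deriv γ t := by
    intro t
    rw [(key_ct t).deriv, (key_γ t).deriv]
    funext i
    simp only [Pi.smul_apply, smul_eq_mul]
    unfold emb
    by_cases h : (i : ℕ) < n
    · rw [dif_pos h, part1 t, (key_nt t).deriv]
      have hAi : A i = n₁ ⟨i, h⟩ := by rw [hA]; unfold emb; rw [dif_pos h]
      have hBi : B i = n₀ ⟨i, h⟩ := by rw [hB]; unfold emb; rw [dif_pos h]
      rw [hAi, hBi]
      simp only [PiLp.add_apply, PiLp.smul_apply, smul_eq_mul]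
    · rw [dif_neg h]
      have hAi : A i = c₁ := by rw [hA]; unfold emb; rw [dif_neg h]
      have hBi : B i = c₀ := by rw [hB]; unfold emb; rw [dif_neg h]
      rw [hAi, hBi]
  refine ⟨claimA, fun _ => -θ, fun t => ?_⟩
  have hVeq : (fun s => emb (et s) ((1 / θ) * deriv ct s)) =
      fun s => fun i => (1 / θ) * (θ * Real.cos (s * θ) / Real.sin θ * A i +
        -(θ * Real.cos ((1 - s) * θ)) / Real.sin θ * B i) := by
    funext s
    rw [claimA s, (key_γ s).deriv]
    funext i
    simp [smul_eq_mul]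
  rw [hVeq]
  have key_V : HasDerivAt
      (fun s => fun i => (1 / θ) * (θ * Real.cos (s * θ) / Real.sin θ * A i +
        -(θ * Real.cos ((1 - s) * θ)) / Real.sin θ * B i)) ((-θ) • γ t) t := by
    refine hasDerivAt_pi.2 fun i => ?_
    have c1 : HasDerivAt (fun s => θ * Real.cos (s * θ) / Real.sin θ * A i)
        (θ * (-Real.sin (t * θ) * θ) / Real.sin θ * A i) t := by
      have hc := (Real.hasDerivAt_cos (t * θ)).comp t (hd_mul θ t)
      exact ((hc.const_mul θ).div_const
        (Real.sin θ)).mul_const (A i)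
    have c2 : HasDerivAt (fun s => -(θ * Real.cos ((1 - s) * θ)) / Real.sin θ * B i)
        (-(θ * (-Real.sin ((1 - t) * θ) * -θ)) / Real.sin θ * B i) t := by
      have hc := (Real.hasDerivAt_cos ((1 - t) * θ)).comp t (hd_sub θ t)
      exact (((hc.const_mul θ).neg).div_const
        (Real.sin θ)).mul_const (B i)
    have := (c1.add c2).const_mul (1 / θ)
    refine this.congr_deriv (Eq.symm ?_)
    show ((-θ) • γ t) i = _
    rw [Pi.smul_apply, smul_eq_mul, hγi t i, lam_eq hθne, lam_eq hθne]
    field_simp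
    ring
  rw [key_V.deriv]
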